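/- For an orientation-preserving circle homeomorphism f with irrational rotation number and a point x ∈ 𝕋, the collection P_k(x) = { f^i(I_k(x)) : 0 ≤ i ≤ q_{k+1}-1 } ∪ { f^j(I_{k+1}(x)) : 0 ≤ j ≤ q_k-1 } covers the circle with the intervals having pairwise disjoint interiors. -/

import Mathlib

open Filter Topology Set

/-- The Gauss map `G(x) = {1/x}`. -/
noncomputable def gauss (x : ℝ) : ℝ := Int.fract x⁻¹

/-- The closed arc on the circle `ℝ/ℤ` from `a` to `b` in the positive direction. -/
def posArc (a b : AddCircle (1:ℝ)) : Set (AddCircle (1:ℝ)) :=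
  {c | ∃ s t : ℝ, 0 ≤ s ∧ s ≤ t ∧ t < 1 ∧
    ((s : ℝ) : AddCircle (1:ℝ)) = c - a ∧ ((t : ℝ) : AddCircle (1:ℝ)) = b - a}

section Core
variable {F : ℝ → ℝ} {ρ : ℝ}

lemma F_add_int (hper : ∀ x, F (x + 1) = F x + 1) : ∀ (m : ℤ) (x : ℝ), F (x + m) = F x + m := by
  intro m
  induction m using Int.induction_on with
  | zero => simp
  | succ n ih =>
      intro x
      have h1 := hper (x + n)
      push_cast
      push_cast at ih
      rw [← add_assoc, h1, ih, add_assoc]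
  | pred n ih =>
      intro x
      have h1 := hper (x + (-(n:ℝ) - 1))
      push_cast
      push_cast at ih
      have : x + (-(n:ℝ) - 1) + 1 = x + (-(n:ℝ)) := by ring
      rw [this] at h1
      have h2 : x + (-(n:ℝ) - 1) = x + (-(n:ℝ)) - 1 := by ring
      rw [ih] at h1
      linarith [h1, (by rw [← h2] : F (x + (-(n:ℝ)) - 1) = F (x + (-(n:ℝ) -1)))]

lemma Fiter_add_int (hper : ∀ x, F (x + 1) = F x + 1) (n : ℕ) (m : ℤ) (x : ℝ) :
    F^[n] (x + m) = F^[n] x + m := by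
  induction n with
  | zero => simp
  | succ n ih => rw [Function.iterate_succ_apply', Function.iterate_succ_apply', ih,
      F_add_int hper]

lemma Fiter_per (hper : ∀ x, F (x + 1) = F x + 1) (n : ℕ) (x : ℝ) :
    F^[n] (x + 1) = F^[n] x + 1 := by
  simpa using Fiter_add_int hper n 1 x

/-- base point independence of rotation number -/
lemma rot_base (hmono : StrictMono F) (hper : ∀ x, F (x + 1) = F x + 1)
    (hrot : Tendsto (fun n : ℕ => F^[n] 0 / n) atTop (𝓝 ρ)) (y : ℝ) :
    Tendsto (fun n : ℕ => F^[n] y / n) atTop (𝓝 ρ) := by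
  have hlow : ∀ n : ℕ, F^[n] 0 + (⌊y⌋ : ℝ) ≤ F^[n] y := by
    intro n
    have := (hmono.iterate n).monotone (Int.floor_le y)
    calc F^[n] 0 + (⌊y⌋:ℝ) = F^[n] ((0:ℝ) + (⌊y⌋:ℤ)) := by rw [Fiter_add_int hper]
    _ = F^[n] ((⌊y⌋:ℤ):ℝ) := by norm_num
    _ ≤ F^[n] y := this
  have hhigh : ∀ n : ℕ, F^[n] y ≤ F^[n] 0 + (⌊y⌋ : ℝ) + 1 := by
    intro n
    have := (hmono.iterate n).monotone (le_of_lt (Int.lt_floor_add_one y))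
    calc F^[n] y ≤ F^[n] ((⌊y⌋:ℝ) + 1) := this
    _ = F^[n] ((0:ℝ) + ((⌊y⌋ + 1 : ℤ):ℝ)) := by push_cast; ring_nf
    _ = F^[n] 0 + ((⌊y⌋ + 1 : ℤ):ℝ) := by rw [Fiter_add_int hper]
    _ = F^[n] 0 + (⌊y⌋:ℝ) + 1 := by push_cast; ring
  have h0 : Tendsto (fun n : ℕ => (((⌊y⌋:ℝ)) / n)) atTop (𝓝 0) :=
    tendsto_const_div_atTop_nhds_zero_nat _
  have h1 : Tendsto (fun n : ℕ => (((⌊y⌋:ℝ) + 1) / n)) atTop (𝓝 0) :=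
    tendsto_const_div_atTop_nhds_zero_nat _
  have hlow' : ∀ᶠ n : ℕ in atTop, F^[n] 0 / n + (⌊y⌋:ℝ) / n ≤ F^[n] y / n := by
    filter_upwards [eventually_gt_atTop 0] with n hn
    rw [← add_div]
    exact div_le_div_of_nonneg_right (hlow n) (by positivity)
  have hhigh' : ∀ᶠ n : ℕ in atTop, F^[n] y / n ≤ F^[n] 0 / n + ((⌊y⌋:ℝ) + 1) / n := by
    filter_upwards [eventually_gt_atTop 0] with n hn
    rw [← add_div]
    refine div_le_div_of_nonneg_right ?_ (by positivity)
    linarith [hhigh n]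
  have l1 : Tendsto (fun n : ℕ => F^[n] 0 / n + (⌊y⌋:ℝ) / n) atTop (𝓝 (ρ + 0)) := hrot.add h0
  have l2 : Tendsto (fun n : ℕ => F^[n] 0 / n + ((⌊y⌋:ℝ) + 1) / n) atTop (𝓝 (ρ + 0)) := hrot.add h1
  rw [add_zero] at l1 l2
  exact tendsto_of_tendsto_of_tendsto_of_le_of_le' l1 l2 hlow' hhigh'

end Core

section Core2
variable {F : ℝ → ℝ} {ρ : ℝ}

lemma key_ne (hmono : StrictMono F) (hper : ∀ x, F (x + 1) = F x + 1)
    (hirr : Irrational ρ)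
    (hrot : Tendsto (fun n : ℕ => F^[n] 0 / n) atTop (𝓝 ρ))
    (n : ℕ) (hn : 0 < n) (m : ℤ) (y : ℝ) : F^[n] y ≠ y + m := by
  intro heq
  have hiter : ∀ j : ℕ, F^[n * j] y = y + (j : ℝ) * m := by
    intro j
    induction j with
    | zero => simp
    | succ j ih =>
        have hnj : n * (j + 1) = n + n * j := by ring
        rw [hnj, Function.iterate_add_apply, ih]
        have h2 : y + (j:ℝ) * m = y + ((j * m : ℤ) : ℝ) := by push_cast; ring
        rw [h2, Fiter_add_int hper n (j * m) y, heq]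
        push_cast; ring
  have T : Tendsto (fun j : ℕ => n * j) atTop atTop :=
    tendsto_atTop_mono (fun j => Nat.le_mul_of_pos_left j hn) tendsto_id
  have hcomp : Tendsto (fun j : ℕ => F^[n * j] y / (n * j : ℕ)) atTop (𝓝 ρ) :=
    (rot_base hmono hper hrot y).comp T
  have h0 : Tendsto (fun j : ℕ => y / ((n * j : ℕ) : ℝ)) atTop (𝓝 0) :=
    (tendsto_const_div_atTop_nhds_zero_nat y).comp T
  have hlim2 : Tendsto (fun j : ℕ => F^[n * j] y / (n * j : ℕ)) atTop (𝓝 ((m : ℝ) / n)) := by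
    have heq2 : ∀ᶠ j : ℕ in atTop, y / ((n * j : ℕ) : ℝ) + (m : ℝ) / n
        = F^[n * j] y / (n * j : ℕ) := by
      filter_upwards [eventually_gt_atTop 0] with j hj
      rw [hiter j]
      have hnj : ((n * j : ℕ) : ℝ) = (n : ℝ) * j := by push_cast; ring
      rw [hnj]
      have hn' : (n:ℝ) ≠ 0 := by positivity
      have hj' : (j:ℝ) ≠ 0 := by positivity
      field_simp
    have := (h0.add tendsto_const_nhds : Tendsto _ atTop (𝓝 (0 + (m:ℝ)/n)))
    rw [zero_add] at this
    exact this.congr' heq2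
  have : ρ = (m : ℝ) / n := tendsto_nhds_unique hcomp hlim2
  exact hirr ⟨(m : ℚ) / (n : ℚ), by push_cast; exact this.symm⟩

lemma key_forall_lt (hmono : StrictMono F) (hcont : Continuous F)
    (hper : ∀ x, F (x + 1) = F x + 1)
    (hrot : Tendsto (fun n : ℕ => F^[n] 0 / n) atTop (𝓝 ρ))
    (n : ℕ) (hn : 0 < n) (m : ℤ)
    (h : ∀ y, y + (m : ℝ) < F^[n] y) : (m : ℝ) < n * ρ := by
  set g : ℝ → ℝ := fun y => F^[n] y - y with hg
  have hgc : Continuous g := (hcont.iterate n).sub continuous_id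
  obtain ⟨ymin, hymin, hmin⟩ := isCompact_Icc.exists_isMinOn (α := ℝ)
    (nonempty_Icc.2 zero_le_one) hgc.continuousOn
  set c := g ymin with hc
  have hcm : (m : ℝ) < c := by have := h ymin; simp only [hg, hc]; linarith
  have hgc_all : ∀ y, c ≤ g y := by
    intro y
    have hy : Int.fract y ∈ Icc (0:ℝ) 1 := ⟨Int.fract_nonneg y, (Int.fract_lt_one y).le⟩
    have h3 : g y = g (Int.fract y) := by
      have h4 : y = Int.fract y + (⌊y⌋ : ℤ) := by rw [Int.fract]; push_cast; ring
      conv_lhs => rw [h4]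
      simp only [hg, Fiter_add_int hper]
      ring
    rw [h3]
    exact hmin hy
  have hind : ∀ j : ℕ, (j : ℝ) * c ≤ F^[n * j] 0 := by
    intro j
    induction j with
    | zero => simp
    | succ j ih =>
        have hnj : n * (j + 1) = n + n * j := by ring
        rw [hnj, Function.iterate_add_apply]
        have h1 := hgc_all (F^[n * j] 0)
        simp only [hg] at h1
        push_cast
        linarith
  have T : Tendsto (fun j : ℕ => n * j) atTop atTop :=
    tendsto_atTop_mono (fun j => Nat.le_mul_of_pos_left j hn) tendsto_id
  have hcomp : Tendsto (fun j : ℕ => F^[n * j] 0 / (n * j : ℕ)) atTop (𝓝 ρ) := hrot.comp T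
  have hge : c / n ≤ ρ := by
    refine ge_of_tendsto hcomp ?_
    filter_upwards [eventually_gt_atTop 0] with j hj
    have hnj : (0:ℝ) < ((n * j : ℕ) : ℝ) := by positivity
    rw [div_le_div_iff₀ (by positivity) hnj]
    calc c * ((n * j:ℕ):ℝ) = ((j:ℝ) * c) * n := by push_cast; ring
    _ ≤ F^[n * j] 0 * n := by
        have := hind j
        have hn' : (0:ℝ) ≤ n := by positivity
        nlinarith
  have hn' : (0:ℝ) < n := by positivity
  calc (m:ℝ) < c := hcm
  _ ≤ n * ρ := by rw [div_le_iff₀ hn'] at hge; linarith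

lemma key_forall_gt (hmono : StrictMono F) (hcont : Continuous F)
    (hper : ∀ x, F (x + 1) = F x + 1)
    (hrot : Tendsto (fun n : ℕ => F^[n] 0 / n) atTop (𝓝 ρ))
    (n : ℕ) (hn : 0 < n) (m : ℤ)
    (h : ∀ y, F^[n] y < y + (m : ℝ)) : n * ρ < (m : ℝ) := by
  set g : ℝ → ℝ := fun y => F^[n] y - y with hg
  have hgc : Continuous g := (hcont.iterate n).sub continuous_id
  obtain ⟨ymax, hymax, hmax⟩ := isCompact_Icc.exists_isMaxOn (α := ℝ)
    (nonempty_Icc.2 zero_le_one) hgc.continuousOn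
  set c := g ymax with hc
  have hcm : c < (m : ℝ) := by have := h ymax; simp only [hg, hc]; linarith
  have hgc_all : ∀ y, g y ≤ c := by
    intro y
    have hy : Int.fract y ∈ Icc (0:ℝ) 1 := ⟨Int.fract_nonneg y, (Int.fract_lt_one y).le⟩
    have h3 : g y = g (Int.fract y) := by
      have h4 : y = Int.fract y + (⌊y⌋ : ℤ) := by rw [Int.fract]; push_cast; ring
      conv_lhs => rw [h4]
      simp only [hg, Fiter_add_int hper]
      ring
    rw [h3]
    exact hmax hy
  have hind : ∀ j : ℕ, F^[n * j] 0 ≤ (j : ℝ) * c := by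
    intro j
    induction j with
    | zero => simp
    | succ j ih =>
        have hnj : n * (j + 1) = n + n * j := by ring
        rw [hnj, Function.iterate_add_apply]
        have h1 := hgc_all (F^[n * j] 0)
        simp only [hg] at h1
        push_cast
        linarith
  have T : Tendsto (fun j : ℕ => n * j) atTop atTop :=
    tendsto_atTop_mono (fun j => Nat.le_mul_of_pos_left j hn) tendsto_id
  have hcomp : Tendsto (fun j : ℕ => F^[n * j] 0 / (n * j : ℕ)) atTop (𝓝 ρ) := hrot.comp T
  have hge : ρ ≤ c / n := by
    refine le_of_tendsto hcomp ?_
    filter_upwards [eventually_gt_atTop 0] with j hj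
    have hnj : (0:ℝ) < ((n * j : ℕ) : ℝ) := by positivity
    rw [div_le_div_iff₀ hnj (by positivity)]
    calc F^[n * j] 0 * n ≤ ((j:ℝ) * c) * n := by
          have := hind j
          have hn' : (0:ℝ) ≤ n := by positivity
          nlinarith
    _ = c * ((n * j:ℕ):ℝ) := by push_cast; ring
  have hn' : (0:ℝ) < n := by positivity
  calc (n:ℝ) * ρ ≤ c := by rw [le_div_iff₀ hn'] at hge; linarith
  _ < m := hcm

/-- The fundamental comparison lemma. -/
lemma key (hmono : StrictMono F) (hcont : Continuous F)
    (hper : ∀ x, F (x + 1) = F x + 1) (hirr : Irrational ρ)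
    (hrot : Tendsto (fun n : ℕ => F^[n] 0 / n) atTop (𝓝 ρ))
    (n : ℕ) (hn : 0 < n) (m : ℤ) (y : ℝ) :
    (y + (m : ℝ) < F^[n] y ↔ (m : ℝ) < n * ρ) := by
  have hdich : (∀ z, z + (m : ℝ) < F^[n] z) ∨ (∀ z, F^[n] z < z + (m : ℝ)) := by
    by_contra hcon
    push_neg at hcon
    obtain ⟨⟨z₁, hz₁⟩, ⟨z₂, hz₂⟩⟩ := hcon
    -- g z₁ ≤ 0 ≤ g z₂ where g z = F^[n] z - z - m
    set g : ℝ → ℝ := fun z => F^[n] z - z - m with hg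
    have hgc : Continuous g := by
      exact ((hcont.iterate n).sub continuous_id).sub continuous_const
    have h₁ : g z₁ ≤ 0 := by simp [hg]; linarith
    have h₂ : 0 ≤ g z₂ := by simp [hg]; linarith
    have : ∃ z₀, g z₀ = 0 := by
      rcases le_total z₁ z₂ with hle | hle
      · have := intermediate_value_Icc hle hgc.continuousOn
        obtain ⟨z₀, _, hz₀⟩ := this ⟨h₁, h₂⟩
        exact ⟨z₀, hz₀⟩
      · have := intermediate_value_Icc' hle hgc.continuousOn
        obtain ⟨z₀, _, hz₀⟩ := this ⟨h₁, h₂⟩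
        exact ⟨z₀, hz₀⟩
    obtain ⟨z₀, hz₀⟩ := this
    have : F^[n] z₀ = z₀ + m := by simp [hg] at hz₀; linarith
    exact key_ne hmono hper hirr hrot n hn m z₀ this
  rcases hdich with hall | hall
  · constructor
    · intro _; exact key_forall_lt hmono hcont hper hrot n hn m hall
    · intro _; exact hall y
  · constructor
    · intro hy; exact absurd (hall y) (by linarith)
    · intro hr
      have := key_forall_gt hmono hcont hper hrot n hn m hall
      linarith

end Core2

section Core3
variable {F : ℝ → ℝ} {ρ : ℝ}

lemma irr_ne (hirr : Irrational ρ) (d : ℕ) (hd : 0 < d) (c : ℤ) : (d:ℝ) * ρ ≠ (c:ℝ) := by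
  intro h
  have hd' : (d:ℝ) ≠ 0 := by positivity
  refine hirr ⟨(c:ℚ)/(d:ℚ), ?_⟩
  push_cast
  rw [div_eq_iff hd']
  linarith

lemma orb_ne (hmono : StrictMono F) (hper : ∀ x, F (x + 1) = F x + 1)
    (hirr : Irrational ρ)
    (hrot : Tendsto (fun n : ℕ => F^[n] 0 / n) atTop (𝓝 ρ))
    (X : ℝ) {n m : ℕ} (hnm : n ≠ m) (z : ℤ) : F^[n] X - F^[m] X ≠ (z:ℝ) := by
  intro h
  rcases lt_or_gt_of_ne hnm with hlt | hlt
  · -- n < m : F^[m] X = F^[m-n] (F^[n] X) ... use key_ne on base F^[n] X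
    have hm : m = (m - n) + n := by omega
    have : F^[m] X = F^[m-n] (F^[n] X) := by
      conv_lhs => rw [hm]
      rw [Function.iterate_add_apply]
    rw [this] at h
    exact key_ne hmono hper hirr hrot (m - n) (by omega) (-z) (F^[n] X) (by push_cast; linarith)
  · have hm : n = (n - m) + m := by omega
    have : F^[n] X = F^[n-m] (F^[m] X) := by
      conv_lhs => rw [hm]
      rw [Function.iterate_add_apply]
    rw [this] at h
    exact key_ne hmono hper hirr hrot (n - m) (by omega) z (F^[m] X) (by push_cast; linarith)

lemma order_lt (hmono : StrictMono F) (hcont : Continuous F)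
    (hper : ∀ x, F (x + 1) = F x + 1) (hirr : Irrational ρ)
    (hrot : Tendsto (fun n : ℕ => F^[n] 0 / n) atTop (𝓝 ρ))
    (X : ℝ) (n m : ℕ) (c : ℤ) :
    (F^[n] X + (c:ℝ) < F^[m] X ↔ (n:ℝ) * ρ + c < (m:ℝ) * ρ) := by
  rcases lt_trichotomy n m with hlt | heq | hlt
  · have hm : m = n + (m - n) := by omega
    have h1 : F^[m] X = F^[n] (F^[m-n] X) := by
      conv_lhs => rw [hm]
      rw [Function.iterate_add_apply]
    have h2 : F^[n] X + (c:ℝ) = F^[n] (X + (c:ℤ)) := (Fiter_add_int hper n c X).symm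
    rw [h1, h2, (hmono.iterate n).lt_iff_lt]
    rw [key hmono hcont hper hirr hrot (m - n) (by omega) c X]
    have : ((m - n : ℕ) : ℝ) = (m:ℝ) - n := by
      have : (n:ℝ) ≤ m := by exact_mod_cast hlt.le
      push_cast [Nat.cast_sub hlt.le]; ring
    rw [this]
    constructor <;> intro <;> nlinarith
  · subst heq
    constructor <;> intro h <;> nlinarith [h]
  · -- m < n
    have hm : n = m + (n - m) := by omega
    have h1 : F^[n] X = F^[m] (F^[n-m] X) := by
      conv_lhs => rw [hm]
      rw [Function.iterate_add_apply]
    have h2 : F^[m] (F^[n-m] X) + (c:ℝ) = F^[m] (F^[n-m] X + (c:ℤ)) :=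
      (Fiter_add_int hper m c _).symm
    rw [h1, h2]
    have h3 : F^[m] (F^[n-m] X + (c:ℝ)) < F^[m] X ↔ F^[n-m] X + (c:ℝ) < X :=
      (hmono.iterate m).lt_iff_lt
    rw [h3]
    set d := n - m with hd
    have hd0 : 0 < d := by omega
    have hkey := key hmono hcont hper hirr hrot d hd0 (-c) X
    have hne := key_ne hmono hper hirr hrot d hd0 (-c) X
    have hcast : ((n:ℝ) - m) = (d:ℝ) := by
      rw [hd]; push_cast [Nat.cast_sub hlt.le]; ring
    have hirrne : (d:ℝ) * ρ ≠ ((-c:ℤ):ℝ) := irr_ne hirr d hd0 (-c)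
    push_cast at hkey hne hirrne
    have hdr : (d:ℝ) * ρ = (n:ℝ) * ρ - (m:ℝ) * ρ := by rw [← hcast]; ring
    constructor
    · intro h
      by_contra hge
      push_neg at hge
      have h5 : -(c:ℝ) < (d:ℝ) * ρ := by
        rcases lt_or_eq_of_le (by linarith : -(c:ℝ) ≤ (d:ℝ)*ρ) with h6 | h6
        · exact h6
        · exact absurd h6.symm hirrne
      have := hkey.mpr h5
      linarith
    · intro h
      by_contra hge
      push_neg at hge
      rcases lt_or_eq_of_le hge with h6 | h6
      · have : -(c:ℝ) < (d:ℝ) * ρ := hkey.mp (by linarith)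
        linarith
      · exact hne (by linarith)

lemma order_le (hmono : StrictMono F) (hcont : Continuous F)
    (hper : ∀ x, F (x + 1) = F x + 1) (hirr : Irrational ρ)
    (hrot : Tendsto (fun n : ℕ => F^[n] 0 / n) atTop (𝓝 ρ))
    (X : ℝ) (n m : ℕ) (c : ℤ) :
    (F^[n] X + (c:ℝ) ≤ F^[m] X ↔ (n:ℝ) * ρ + c ≤ (m:ℝ) * ρ) := by
  have h := order_lt hmono hcont hper hirr hrot X m n (-c)
  push_cast at h
  constructor
  · intro hle
    by_contra hc
    push_neg at hc
    have : (m:ℝ) * ρ + -(c:ℝ) < (n:ℝ) * ρ := by linarith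
    have := h.mpr this
    linarith
  · intro hle
    by_contra hc
    push_neg at hc
    have : F^[m] X + -(c:ℝ) < F^[n] X := by linarith
    have := h.mp this
    linarith

lemma floor_orb (hmono : StrictMono F) (hcont : Continuous F)
    (hper : ∀ x, F (x + 1) = F x + 1) (hirr : Irrational ρ)
    (hrot : Tendsto (fun n : ℕ => F^[n] 0 / n) atTop (𝓝 ρ))
    (X : ℝ) (n m : ℕ) :
    ⌊F^[n] X - F^[m] X⌋ = ⌊(n:ℝ) * ρ - (m:ℝ) * ρ⌋ := by
  rw [Int.floor_eq_iff]
  constructor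
  · have h := (order_le hmono hcont hper hirr hrot X m n ⌊(n:ℝ) * ρ - (m:ℝ) * ρ⌋).mpr
      (by linarith [Int.floor_le ((n:ℝ) * ρ - (m:ℝ) * ρ)])
    linarith
  · have h := (order_lt hmono hcont hper hirr hrot X n m (-(⌊(n:ℝ) * ρ - (m:ℝ) * ρ⌋ + 1))).mpr
      (by push_cast; linarith [Int.lt_floor_add_one ((n:ℝ) * ρ - (m:ℝ) * ρ)])
    push_cast at h
    linarith

end Core3

section Circle

local notation "𝕋" => AddCircle (1:ℝ)

lemma coe_eq_iff (u v : ℝ) : ((u : ℝ) : 𝕋) = ((v : ℝ) : 𝕋) ↔ ∃ m : ℤ, v = u + m := by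
  rw [QuotientAddGroup.eq, AddSubgroup.mem_zmultiples_iff]
  constructor
  · rintro ⟨k, hk⟩
    refine ⟨k, ?_⟩
    rw [zsmul_eq_mul, mul_one] at hk
    linarith
  · rintro ⟨m, rfl⟩
    exact ⟨m, by rw [zsmul_eq_mul, mul_one]; ring⟩

lemma coe_surj (c : 𝕋) : ∃ w : ℝ, ((w : ℝ) : 𝕋) = c :=
  QuotientAddGroup.induction_on c fun w => ⟨w, rfl⟩

lemma cont_coe : Continuous ((↑·) : ℝ → 𝕋) := continuous_quotient_mk'

lemma mem_image_Icc {a b w : ℝ} (h0 : 0 ≤ b - a) (h1 : b - a < 1) :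
    ((w : ℝ) : 𝕋) ∈ (fun y : ℝ => ((y : ℝ) : 𝕋)) '' Set.Icc a b ↔ Int.fract (w - a) ≤ b - a := by
  constructor
  · rintro ⟨y, ⟨hy1, hy2⟩, hyw⟩
    obtain ⟨m, hm⟩ := (coe_eq_iff y w).mp hyw
    have : Int.fract (w - a) = y - a := by
      rw [hm, show y + (m:ℝ) - a = (y - a) + m by ring, Int.fract_add_intCast]
      exact Int.fract_eq_self.mpr ⟨by linarith, by linarith⟩
    linarith [this]
  · intro h
    refine ⟨a + Int.fract (w - a), ⟨by linarith [Int.fract_nonneg (w - a)], by linarith⟩, ?_⟩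
    rw [coe_eq_iff]
    exact ⟨⌊w - a⌋, by rw [Int.fract]; ring⟩

lemma posArc_eq (u v : ℝ) :
    posArc ((u : ℝ) : 𝕋) ((v : ℝ) : 𝕋)
      = (fun y : ℝ => ((y : ℝ) : 𝕋)) '' Set.Icc u (u + Int.fract (v - u)) := by
  ext c
  constructor
  · rintro ⟨s, t, hs0, hst, ht1, hsc, htv⟩
    have htvu : ((t : ℝ) : 𝕋) = ((v - u : ℝ) : 𝕋) := by rw [htv, AddCircle.coe_sub]
    obtain ⟨m, hm⟩ := (coe_eq_iff t (v - u)).mp htvu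
    have ht : Int.fract (v - u) = t := by
      rw [hm, Int.fract_add_intCast]
      exact Int.fract_eq_self.mpr ⟨le_trans hs0 hst, ht1⟩
    have hc : c = ((u + s : ℝ) : 𝕋) := by
      have : c = ((u:ℝ) : 𝕋) + ((s:ℝ) : 𝕋) := by rw [hsc]; abel
      rw [this, ← AddCircle.coe_add]
    exact ⟨u + s, ⟨by linarith, by linarith⟩, hc.symm⟩
  · rintro ⟨y, ⟨hy1, hy2⟩, rfl⟩
    refine ⟨y - u, Int.fract (v - u), by linarith, by linarith, Int.fract_lt_one _, ?_, ?_⟩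
    · rw [← AddCircle.coe_sub]
    · rw [← AddCircle.coe_sub, coe_eq_iff]
      exact ⟨⌊v - u⌋, by rw [Int.fract]; ring⟩

lemma hlift_iter {f : 𝕋 → 𝕋} {F : ℝ → ℝ}
    (hlift : ∀ x : ℝ, f ((x : ℝ) : 𝕋) = ((F x : ℝ) : 𝕋)) (n : ℕ) (w : ℝ) :
    f^[n] ((w : ℝ) : 𝕋) = ((F^[n] w : ℝ) : 𝕋) := by
  induction n with
  | zero => simp
  | succ n ih => rw [Function.iterate_succ_apply', Function.iterate_succ_apply', ih, hlift]

lemma Ficc {F : ℝ → ℝ} (hmono : StrictMono F) (hcont : Continuous F)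
    (n : ℕ) {a b : ℝ} (hab : a ≤ b) :
    F^[n] '' Set.Icc a b = Set.Icc (F^[n] a) (F^[n] b) := by
  apply Set.eq_of_subset_of_subset
  · rintro z ⟨y, ⟨hy1, hy2⟩, rfl⟩
    exact ⟨(hmono.iterate n).monotone hy1, (hmono.iterate n).monotone hy2⟩
  · exact intermediate_value_Icc hab (hcont.iterate n).continuousOn

lemma image_arc {f : 𝕋 → 𝕋} {F : ℝ → ℝ}
    (hlift : ∀ x : ℝ, f ((x : ℝ) : 𝕋) = ((F x : ℝ) : 𝕋))
    (hmono : StrictMono F) (hcont : Continuous F) (n : ℕ) {a b : ℝ} (hab : a ≤ b) :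
    f^[n] '' ((fun y : ℝ => ((y : ℝ) : 𝕋)) '' Set.Icc a b)
      = (fun y : ℝ => ((y : ℝ) : 𝕋)) '' Set.Icc (F^[n] a) (F^[n] b) := by
  rw [← Ficc hmono hcont n hab, Set.image_image, ← Set.image_comp]
  congr 1
  ext y
  simp [Function.comp, hlift_iter hlift]

lemma interior_subset_Ioo {a b : ℝ} (h0 : 0 ≤ b - a) (h1 : b - a < 1) :
    interior ((fun y : ℝ => ((y : ℝ) : 𝕋)) '' Set.Icc a b)
      ⊆ (fun y : ℝ => ((y : ℝ) : 𝕋)) '' Set.Ioo a b := by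
  intro c hc
  obtain ⟨w, rfl⟩ := coe_surj c
  have hmem : Int.fract (w - a) ≤ b - a :=
    (mem_image_Icc h0 h1).mp (interior_subset hc)
  set s := Int.fract (w - a) with hs
  have hs0 : 0 ≤ s := Int.fract_nonneg _
  have hweq : ((w : ℝ) : 𝕋) = ((a + s : ℝ) : 𝕋) := by
    rw [coe_eq_iff]
    exact ⟨-⌊w - a⌋, by rw [hs, Int.fract]; push_cast; ring⟩
  have hnhds : ∀ y : ℝ, |y - w| < (0:ℝ) → True := fun _ _ => trivial
  -- main case split
  rcases lt_or_eq_of_le hs0 with hspos | hszero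
  · rcases lt_or_eq_of_le hmem with hslt | hseq
    · exact ⟨a + s, ⟨by linarith, by linarith⟩, hweq.symm⟩
    · -- s = b - a : c = ↑b, not interior
      exfalso
      have hb : ((w : ℝ) : 𝕋) = ((b : ℝ) : 𝕋) := by
        rw [hweq, hseq]; norm_num
      rw [hb] at hc
      have hSnhds : (fun y : ℝ => ((y : ℝ) : 𝕋)) '' Set.Icc a b ∈ 𝓝 (((b : ℝ) : 𝕋)) :=
        mem_interior_iff_mem_nhds.mp hc
      have hpre : (fun y : ℝ => ((y : ℝ) : 𝕋)) ⁻¹' ((fun y : ℝ => ((y : ℝ) : 𝕋)) '' Set.Icc a b)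
          ∈ 𝓝 b := cont_coe.continuousAt.preimage_mem_nhds hSnhds
      obtain ⟨ε, hε, hball⟩ := Metric.mem_nhds_iff.mp hpre
      set δ := min (ε/2) ((1 - (b - a))/2) with hδdef
      have hδ : 0 < δ := by
        apply lt_min (by linarith) (by linarith)
      have hδ2 : δ ≤ (1 - (b - a))/2 := min_le_right _ _
      have hy : b + δ ∈ Metric.ball b ε := by
        have hd : dist (b + δ) b = δ := by
          rw [Real.dist_eq, show b + δ - b = δ by ring, abs_of_pos hδ]
        rw [Metric.mem_ball, hd]
        calc δ ≤ ε/2 := min_le_left _ _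
        _ < ε := by linarith
      have hyS := hball hy
      rw [Set.mem_preimage, mem_image_Icc h0 h1] at hyS
      have : Int.fract (b + δ - a) = b - a + δ := by
        rw [show b + δ - a = b - a + δ by ring]
        exact Int.fract_eq_self.mpr ⟨by linarith, by linarith⟩
      rw [this] at hyS
      linarith
  · -- s = 0 : c = ↑a, not interior
    exfalso
    have ha : ((w : ℝ) : 𝕋) = ((a : ℝ) : 𝕋) := by
      rw [hweq, ← hszero]; norm_num
    rw [ha] at hc
    have hSnhds : (fun y : ℝ => ((y : ℝ) : 𝕋)) '' Set.Icc a b ∈ 𝓝 (((a : ℝ) : 𝕋)) :=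
      mem_interior_iff_mem_nhds.mp hc
    have hpre : (fun y : ℝ => ((y : ℝ) : 𝕋)) ⁻¹' ((fun y : ℝ => ((y : ℝ) : 𝕋)) '' Set.Icc a b)
        ∈ 𝓝 a := cont_coe.continuousAt.preimage_mem_nhds hSnhds
    obtain ⟨ε, hε, hball⟩ := Metric.mem_nhds_iff.mp hpre
    set δ := min (ε/2) ((1 - (b - a))/2) with hδdef
    have hδ : 0 < δ := by
      apply lt_min (by linarith) (by linarith)
    have hδ2 : δ ≤ (1 - (b - a))/2 := min_le_right _ _
    have hδ3 : δ < 1 := by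
      have : (1 - (b - a))/2 ≤ 1/2 := by linarith
      have := min_le_right (ε/2) ((1 - (b - a))/2)
      simp only [hδdef]
      linarith
    have hy : a - δ ∈ Metric.ball a ε := by
      have hd : dist (a - δ) a = δ := by
        rw [Real.dist_eq, show a - δ - a = -δ by ring, abs_neg, abs_of_pos hδ]
      rw [Metric.mem_ball, hd]
      calc δ ≤ ε/2 := min_le_left _ _
      _ < ε := by linarith
    have hyS := hball hy
    rw [Set.mem_preimage, mem_image_Icc h0 h1] at hyS
    have : Int.fract (a - δ - a) = 1 - δ := by
      rw [show a - δ - a = -δ by ring, show -δ = (-1 : ℤ) + (1 - δ) by push_cast; ring,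
        Int.fract_intCast_add]
      exact Int.fract_eq_self.mpr ⟨by linarith, by linarith⟩
    rw [this] at hyS
    linarith

end Circle

section Cover

local notation "𝕋" => AddCircle (1:ℝ)

lemma cover_lemma {ι : Type*} [Fintype ι] [Nonempty ι] (L R : ι → ℝ)
    (hlen : ∀ t, 0 < R t - L t) (hlt1 : ∀ t, R t - L t < 1)
    (hmatch : ∀ t, ∃ t', ∃ m : ℤ, R t = L t' + (m:ℝ)) :
    (⋃ t, (fun y : ℝ => ((y:ℝ) : 𝕋)) '' Set.Icc (L t) (R t)) = Set.univ := by
  ext c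
  simp only [Set.mem_iUnion, Set.mem_univ, iff_true]
  obtain ⟨w, rfl⟩ := coe_surj c
  obtain ⟨t₀, -, hmin⟩ := Finset.exists_min_image Finset.univ (fun t => Int.fract (w - L t))
    ⟨Classical.arbitrary ι, Finset.mem_univ _⟩
  by_cases hle : Int.fract (w - L t₀) ≤ R t₀ - L t₀
  · exact ⟨t₀, (mem_image_Icc (hlen t₀).le (hlt1 t₀)).mpr hle⟩
  · exfalso
    push_neg at hle
    obtain ⟨t', m, hm⟩ := hmatch t₀
    have h1 : Int.fract (w - L t') = Int.fract (w - L t₀) - (R t₀ - L t₀) := by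
      have hw : w - L t' = (Int.fract (w - L t₀) - (R t₀ - L t₀)) + ((⌊w - L t₀⌋ + m : ℤ) : ℝ) := by
        rw [Int.fract]; push_cast; linarith [hm]
      rw [hw, Int.fract_add_intCast]
      have hfl := Int.fract_lt_one (w - L t₀)
      have hl := hlen t₀
      exact Int.fract_eq_self.mpr ⟨by linarith, by linarith⟩
    have h2 := hmin t' (Finset.mem_univ _)
    rw [h1] at h2
    linarith [hlen t₀]

end Cover

section CF

/-- numerators of the continued fraction convergents -/
def convP (a : ℕ → ℕ) : ℕ → ℤ
  | 0 => 0
  | 1 => 1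
  | (k+2) => (a (k+1) : ℤ) * convP a (k+1) + convP a k

variable {ρ : ℝ} {a qd : ℕ → ℕ}

/-- β_k = ∏_{j=0}^{k} G^j(ρ) -/
noncomputable def Bprod (ρ : ℝ) : ℕ → ℝ := fun k => ∏ j ∈ Finset.range (k+1), gauss^[j] ρ

lemma rhoseq_mem (hirr : Irrational ρ) (hρ : ρ ∈ Set.Ioo (0:ℝ) 1) (j : ℕ) :
    Irrational (gauss^[j] ρ) ∧ gauss^[j] ρ ∈ Set.Ioo (0:ℝ) 1 := by
  induction j with
  | zero => exact ⟨hirr, hρ⟩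
  | succ j ih =>
      obtain ⟨hi, h0, h1⟩ := ih
      rw [Function.iterate_succ_apply']
      have hinv : Irrational (gauss^[j] ρ)⁻¹ := hi.inv
      have hfr : Irrational (gauss (gauss^[j] ρ)) := by
        rw [gauss, Int.fract]
        exact hinv.sub_intCast _
      refine ⟨hfr, ⟨?_, ?_⟩⟩
      · rcases lt_or_eq_of_le (Int.fract_nonneg (gauss^[j] ρ)⁻¹) with h | h
        · exact h
        · exfalso; exact hfr (by rw [gauss, ← h]; exact ⟨0, by norm_num⟩)
      · exact Int.fract_lt_one _

lemma Bprod_pos (hirr : Irrational ρ) (hρ : ρ ∈ Set.Ioo (0:ℝ) 1) (k : ℕ) :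
    0 < Bprod ρ k :=
  Finset.prod_pos fun j _ => (rhoseq_mem hirr hρ j).2.1

lemma Bprod_prefix_le_one (hirr : Irrational ρ) (hρ : ρ ∈ Set.Ioo (0:ℝ) 1) (k : ℕ) :
    ∏ j ∈ Finset.range k, gauss^[j] ρ ≤ 1 := by
  induction k with
  | zero => simp
  | succ k ih =>
      rw [Finset.prod_range_succ]
      have h1 := (rhoseq_mem hirr hρ k).2
      have h2 : 0 < ∏ j ∈ Finset.range k, gauss^[j] ρ :=
        Finset.prod_pos fun j _ => (rhoseq_mem hirr hρ j).2.1
      nlinarith [h1.1, h1.2]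

lemma Bprod_lt_one (hirr : Irrational ρ) (hρ : ρ ∈ Set.Ioo (0:ℝ) 1) (k : ℕ) :
    Bprod ρ k < 1 := by
  have h := Bprod_prefix_le_one hirr hρ k
  have h1 := (rhoseq_mem hirr hρ k).2
  have h2 : 0 < ∏ j ∈ Finset.range k, gauss^[j] ρ :=
    Finset.prod_pos fun j _ => (rhoseq_mem hirr hρ j).2.1
  rw [Bprod, Finset.prod_range_succ]
  nlinarith [h1.1, h1.2]

lemma Bprod_succ (k : ℕ) : Bprod ρ (k+1) = Bprod ρ k * gauss^[k+1] ρ := by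
  rw [Bprod, Bprod, Finset.prod_range_succ]

lemma Bprod_dec (hirr : Irrational ρ) (hρ : ρ ∈ Set.Ioo (0:ℝ) 1) (k : ℕ) :
    Bprod ρ (k+1) < Bprod ρ k := by
  rw [Bprod_succ]
  have h1 := (rhoseq_mem hirr hρ (k+1)).2
  have h2 := Bprod_pos hirr hρ k
  nlinarith [h1.1, h1.2]

lemma digit_ge_one (hirr : Irrational ρ) (hρ : ρ ∈ Set.Ioo (0:ℝ) 1)
    (hdig : ∀ j, (a j : ℤ) = ⌊(gauss^[j] ρ)⁻¹⌋) (j : ℕ) : 1 ≤ a j := by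
  have h := (rhoseq_mem hirr hρ j).2
  have hinv : 1 < (gauss^[j] ρ)⁻¹ := by
    have := h.1
    have := h.2
    rw [show (1:ℝ) = (gauss^[j] ρ) * (gauss^[j] ρ)⁻¹ by field_simp]
    exact mul_lt_of_lt_one_left (by positivity) h.2
  have h2 : (1:ℤ) ≤ ⌊(gauss^[j] ρ)⁻¹⌋ := by
    rw [Int.le_floor]; push_cast; linarith
  rw [← hdig j] at h2
  exact_mod_cast h2

end CF

section CF2
variable {ρ : ℝ} {a qd : ℕ → ℕ}

lemma q_pos (hirr : Irrational ρ) (hρ : ρ ∈ Set.Ioo (0:ℝ) 1)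
    (hdig : ∀ j, (a j : ℤ) = ⌊(gauss^[j] ρ)⁻¹⌋)
    (hq0 : qd 0 = 1) (hq1 : qd 1 = a 0)
    (hqrec : ∀ k, qd (k + 2) = a (k + 1) * qd (k + 1) + qd k) :
    ∀ k, 1 ≤ qd k ∧ qd k ≤ qd (k+1) := by
  intro k
  induction k with
  | zero =>
      refine ⟨by omega, ?_⟩
      rw [hq0, hq1]
      exact digit_ge_one hirr hρ hdig 0
  | succ k ih =>
      obtain ⟨h1, h2⟩ := ih
      have h3 := digit_ge_one hirr hρ hdig (k+1)
      constructor
      · omega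
      · rw [hqrec k]
        nlinarith

/-- The fundamental identity q_k ρ - p_k = (-1)^k β_k -/
lemma eps_id (hirr : Irrational ρ) (hρ : ρ ∈ Set.Ioo (0:ℝ) 1)
    (hdig : ∀ j, (a j : ℤ) = ⌊(gauss^[j] ρ)⁻¹⌋)
    (hq0 : qd 0 = 1) (hq1 : qd 1 = a 0)
    (hqrec : ∀ k, qd (k + 2) = a (k + 1) * qd (k + 1) + qd k) :
    ∀ k, (qd k : ℝ) * ρ - (convP a k : ℝ) = (-1)^k * Bprod ρ k := by
  have gs : ∀ j : ℕ, gauss^[j+1] ρ = (gauss^[j] ρ)⁻¹ - (a j : ℝ) := by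
    intro j
    rw [Function.iterate_succ_apply', gauss, Int.fract]
    congr 1
    exact_mod_cast congrArg (fun z : ℤ => (z:ℝ)) (hdig j).symm
  have base0 : (qd 0 : ℝ) * ρ - (convP a 0 : ℝ) = (-1)^0 * Bprod ρ 0 := by
    simp [hq0, convP, Bprod]
  have base1 : (qd 1 : ℝ) * ρ - (convP a 1 : ℝ) = (-1)^1 * Bprod ρ 1 := by
    have h1 := gs 0
    simp only [Function.iterate_zero_apply] at h1
    have hρ0 : ρ ≠ 0 := ne_of_gt hρ.1
    simp only [hq1, convP, Bprod]
    rw [Finset.prod_range_succ]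
    simp only [Finset.prod_range_one, Function.iterate_zero_apply, Function.iterate_one]
    rw [show gauss ρ = gauss^[1] ρ by simp, h1]
    push_cast
    field_simp
    ring
  have step : ∀ k, ((qd k : ℝ) * ρ - (convP a k : ℝ) = (-1)^k * Bprod ρ k) →
      ((qd (k+1) : ℝ) * ρ - (convP a (k+1) : ℝ) = (-1)^(k+1) * Bprod ρ (k+1)) →
      ((qd (k+2) : ℝ) * ρ - (convP a (k+2) : ℝ) = (-1)^(k+2) * Bprod ρ (k+2)) := by
    intro k ih1 ih2
    have hrec : (qd (k+2) : ℝ) = (a (k+1) : ℝ) * (qd (k+1) : ℝ) + (qd k : ℝ) := by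
      rw [hqrec k]; push_cast; ring
    have hprec : (convP a (k+2) : ℝ) = (a (k+1) : ℝ) * (convP a (k+1) : ℝ) + (convP a k : ℝ) := by
      rw [show convP a (k+2) = (a (k+1) : ℤ) * convP a (k+1) + convP a k from rfl]
      push_cast; ring
    have hB2 : Bprod ρ (k+2) = Bprod ρ k - (a (k+1) : ℝ) * Bprod ρ (k+1) := by
      rw [Bprod_succ, gs (k+1), Bprod_succ]
      have hpos := (rhoseq_mem hirr hρ (k+1)).2.1
      have hne : gauss^[k+1] ρ ≠ 0 := ne_of_gt hpos
      rw [Function.iterate_succ_apply] at hne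
      field_simp
    rw [hrec, hprec, hB2]
    have hsgn : ((-1:ℝ))^(k+2) = (-1)^k := by ring
    have hsgn1 : ((-1:ℝ))^(k+1) = -(-1)^k := by ring
    rw [hsgn]
    rw [hsgn1] at ih2
    nlinarith [ih1, ih2]
  intro k
  induction k using Nat.twoStepInduction with
  | zero => exact base0
  | one => exact base1
  | more k ih1 ih2 => exact step k ih1 ih2

lemma det_id (hq0 : qd 0 = 1) (hq1 : qd 1 = a 0)
    (hqrec : ∀ k, qd (k + 2) = a (k + 1) * qd (k + 1) + qd k) :
    ∀ k, convP a (k+1) * (qd k : ℤ) - convP a k * (qd (k+1) : ℤ) = (-1)^k := by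
  intro k
  induction k with
  | zero => simp [hq0, convP]
  | succ k ih =>
      have h1 : convP a (k+2) = (a (k+1) : ℤ) * convP a (k+1) + convP a k := rfl
      have h2 : (qd (k+2) : ℤ) = (a (k+1) : ℤ) * (qd (k+1) : ℤ) + (qd k : ℤ) := by
        rw [hqrec k]; push_cast; ring
      rw [h1, h2]
      have : ((-1:ℤ))^(k+1) = -(-1)^k := by ring
      rw [this, ← ih]
      ring

lemma Bsum_le_one (hirr : Irrational ρ) (hρ : ρ ∈ Set.Ioo (0:ℝ) 1)
    (hdig : ∀ j, (a j : ℤ) = ⌊(gauss^[j] ρ)⁻¹⌋) (k : ℕ) :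
    Bprod ρ k + Bprod ρ (k+1) ≤ 1 := by
  have gs : gauss^[k+1] ρ = (gauss^[k] ρ)⁻¹ - (a k : ℝ) := by
    rw [Function.iterate_succ_apply', gauss, Int.fract]
    congr 1
    exact_mod_cast congrArg (fun z : ℤ => (z:ℝ)) (hdig k).symm
  have ha := digit_ge_one hirr hρ hdig k
  have ha' : (1:ℝ) ≤ (a k : ℝ) := by exact_mod_cast ha
  have hpre : ∏ j ∈ Finset.range k, gauss^[j] ρ ≤ 1 := Bprod_prefix_le_one hirr hρ k
  have hprepos : 0 < ∏ j ∈ Finset.range k, gauss^[j] ρ :=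
    Finset.prod_pos fun j _ => (rhoseq_mem hirr hρ j).2.1
  have hBk : Bprod ρ k = (∏ j ∈ Finset.range k, gauss^[j] ρ) * gauss^[k] ρ := by
    rw [Bprod, Finset.prod_range_succ]
  have hρk := (rhoseq_mem hirr hρ k).2
  -- B k + B (k+1) = B k * (1 + ρ_{k+1}) ≤ B k / ρ_k = prefix ≤ 1
  rw [Bprod_succ, gs]
  rw [hBk]
  have h1 : 1 + ((gauss^[k] ρ)⁻¹ - (a k : ℝ)) ≤ (gauss^[k] ρ)⁻¹ := by linarith
  have h2 : (0:ℝ) < (∏ j ∈ Finset.range k, gauss^[j] ρ) * gauss^[k] ρ :=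
    mul_pos hprepos hρk.1
  have hinv : gauss^[k] ρ * (gauss^[k] ρ)⁻¹ = 1 := mul_inv_cancel₀ (ne_of_gt hρk.1)
  nlinarith [hρk.1, hρk.2]

end CF2

section CF3
variable {ρ : ℝ} {a qd : ℕ → ℕ}

lemma decomp (hq0 : qd 0 = 1) (hq1 : qd 1 = a 0)
    (hqrec : ∀ k, qd (k + 2) = a (k + 1) * qd (k + 1) + qd k) (k : ℕ) (D m : ℤ) :
    ∃ A B : ℤ, D = A * (qd k : ℤ) + B * (qd (k+1) : ℤ)
      ∧ m = A * convP a k + B * convP a (k+1) := by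
  refine ⟨(-1)^k * (convP a (k+1) * D - (qd (k+1):ℤ) * m),
    (-1)^k * ((qd k:ℤ) * m - convP a k * D), ?_, ?_⟩
  · have hdet := det_id hq0 hq1 hqrec k
    have hsq : ((-1:ℤ)^k) * ((-1:ℤ)^k) = 1 := by
      rw [← pow_add]; exact Even.neg_one_pow ⟨k, rfl⟩
    linear_combination (-(-1:ℤ)^k * D) * hdet + (-D) * hsq
  · have hdet := det_id hq0 hq1 hqrec k
    have hsq : ((-1:ℤ)^k) * ((-1:ℤ)^k) = 1 := by
      rw [← pow_add]; exact Even.neg_one_pow ⟨k, rfl⟩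
    linear_combination (-(-1:ℤ)^k * m) * hdet + (-m) * hsq

lemma val_id (hirr : Irrational ρ) (hρ : ρ ∈ Set.Ioo (0:ℝ) 1)
    (hdig : ∀ j, (a j : ℤ) = ⌊(gauss^[j] ρ)⁻¹⌋)
    (hq0 : qd 0 = 1) (hq1 : qd 1 = a 0)
    (hqrec : ∀ k, qd (k + 2) = a (k + 1) * qd (k + 1) + qd k)
    (k : ℕ) {D m A B : ℤ}
    (hD : D = A * (qd k : ℤ) + B * (qd (k+1) : ℤ))
    (hm : m = A * convP a k + B * convP a (k+1)) :
    (D:ℝ) * ρ - (m:ℝ)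
      = (A:ℝ) * ((-1)^k * Bprod ρ k) + (B:ℝ) * ((-1)^(k+1) * Bprod ρ (k+1)) := by
  have hεk := eps_id hirr hρ hdig hq0 hq1 hqrec k
  have hεk1 := eps_id hirr hρ hdig hq0 hq1 hqrec (k+1)
  have hDr : (D:ℝ) = (A:ℝ) * (qd k : ℝ) + (B:ℝ) * (qd (k+1) : ℝ) := by
    exact_mod_cast congrArg (fun z : ℤ => (z:ℝ)) hD
  have hmr : (m:ℝ) = (A:ℝ) * (convP a k : ℝ) + (B:ℝ) * (convP a (k+1) : ℝ) := by
    exact_mod_cast congrArg (fun z : ℤ => (z:ℝ)) hm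
  linear_combination ρ * hDr - hmr + (A:ℝ) * hεk + (B:ℝ) * hεk1

lemma L1 (hirr : Irrational ρ) (hρ : ρ ∈ Set.Ioo (0:ℝ) 1)
    (hdig : ∀ j, (a j : ℤ) = ⌊(gauss^[j] ρ)⁻¹⌋)
    (hq0 : qd 0 = 1) (hq1 : qd 1 = a 0)
    (hqrec : ∀ k, qd (k + 2) = a (k + 1) * qd (k + 1) + qd k)
    (k : ℕ) (D m : ℤ) (hD0 : D ≠ 0) (hDlt : |D| < (qd (k+1) : ℤ)) :
    Bprod ρ k ≤ |(D:ℝ) * ρ - (m:ℝ)| := by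
  obtain ⟨A, B, hD, hm⟩ := decomp hq0 hq1 hqrec k D m
  have hval := val_id hirr hρ hdig hq0 hq1 hqrec k hD hm
  have hβk : 0 < Bprod ρ k := Bprod_pos hirr hρ k
  have hβk1 : 0 < Bprod ρ (k+1) := Bprod_pos hirr hρ (k+1)
  have hβdec : Bprod ρ (k+1) < Bprod ρ k := Bprod_dec hirr hρ k
  have habs : |(D:ℝ) * ρ - (m:ℝ)| = |(A:ℝ) * Bprod ρ k - (B:ℝ) * Bprod ρ (k+1)| := by
    rcases Nat.even_or_odd k with hpar | hpar
    · have h1 : ((-1:ℝ))^k = 1 := hpar.neg_one_pow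
      have h2 : ((-1:ℝ))^(k+1) = -1 := by rw [pow_succ, h1]; ring
      rw [hval, h1, h2,
        show (A:ℝ) * (1 * Bprod ρ k) + (B:ℝ) * (-1 * Bprod ρ (k+1))
          = (A:ℝ) * Bprod ρ k - (B:ℝ) * Bprod ρ (k+1) by ring]
    · have h1 : ((-1:ℝ))^k = -1 := hpar.neg_one_pow
      have h2 : ((-1:ℝ))^(k+1) = 1 := by rw [pow_succ, h1]; ring
      rw [hval, h1, h2,
        show (A:ℝ) * (-1 * Bprod ρ k) + (B:ℝ) * (1 * Bprod ρ (k+1))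
          = -((A:ℝ) * Bprod ρ k - (B:ℝ) * Bprod ρ (k+1)) by ring, abs_neg]
  rw [habs]
  by_contra hcon
  push_neg at hcon
  obtain ⟨hc1, hc2⟩ := abs_lt.mp hcon
  obtain ⟨hq1le, hq2le⟩ := q_pos hirr hρ hdig hq0 hq1 hqrec k
  have hqk : (1:ℤ) ≤ (qd k : ℤ) := by exact_mod_cast hq1le
  have hqk1 : (qd k : ℤ) ≤ (qd (k+1) : ℤ) := by exact_mod_cast hq2le
  obtain ⟨hDlo, hDhi⟩ := abs_lt.mp hDlt
  rcases lt_trichotomy A 0 with hA | hA | hA <;> rcases lt_trichotomy B 0 with hB | hB | hB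
  · -- A<0, B<0 : D ≤ -(q_k + q_{k+1})
    have hA' : A ≤ -1 := by omega
    have hB' : B ≤ -1 := by omega
    nlinarith [hD, hDlo]
  · -- A<0, B=0 : |A βk| ≥ βk
    subst hB
    have hA' : (A:ℝ) ≤ -1 := by exact_mod_cast (by omega : A ≤ -1)
    push_cast at hc1
    nlinarith
  · -- A<0, B>0 : val ≤ -βk - βk1
    have hA' : (A:ℝ) ≤ -1 := by exact_mod_cast (by omega : A ≤ -1)
    have hB' : (1:ℝ) ≤ (B:ℝ) := by exact_mod_cast (by omega : 1 ≤ B)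
    nlinarith
  · -- A=0, B<0 : D = B q_{k+1} ≤ -q_{k+1}
    subst hA
    have hB' : B ≤ -1 := by omega
    nlinarith [hD, hDlo]
  · -- A=0, B=0 : D = 0
    subst hA; subst hB
    simp at hD
    exact hD0 hD
  · -- A=0, B>0 : D ≥ q_{k+1}
    subst hA
    have hB' : 1 ≤ B := by omega
    nlinarith [hD, hDhi]
  · -- A>0, B<0 : val ≥ βk + βk1
    have hA' : (1:ℝ) ≤ (A:ℝ) := by exact_mod_cast (by omega : 1 ≤ A)
    have hB' : (B:ℝ) ≤ -1 := by exact_mod_cast (by omega : B ≤ -1)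
    nlinarith
  · -- A>0, B=0 : |A βk| ≥ βk
    subst hB
    have hA' : (1:ℝ) ≤ (A:ℝ) := by exact_mod_cast (by omega : 1 ≤ A)
    push_cast at hc2
    nlinarith
  · -- A>0, B>0 : D ≥ q_k + q_{k+1}
    have hA' : 1 ≤ A := by omega
    have hB' : 1 ≤ B := by omega
    nlinarith [hD, hDhi]

lemma L2 (hirr : Irrational ρ) (hρ : ρ ∈ Set.Ioo (0:ℝ) 1)
    (hdig : ∀ j, (a j : ℤ) = ⌊(gauss^[j] ρ)⁻¹⌋)
    (hq0 : qd 0 = 1) (hq1 : qd 1 = a 0)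
    (hqrec : ∀ k, qd (k + 2) = a (k + 1) * qd (k + 1) + qd k)
    (k : ℕ) (D m : ℤ) (hlo : -(qd k : ℤ) < D) (hhi : D < (qd (k+1) : ℤ)) :
    ¬ (0 < (-1:ℝ)^k * ((m:ℝ) - (D:ℝ)*ρ)
        ∧ (-1:ℝ)^k * ((m:ℝ) - (D:ℝ)*ρ) < Bprod ρ k + Bprod ρ (k+1)) := by
  rintro ⟨h1, h2⟩
  obtain ⟨A, B, hD, hm⟩ := decomp hq0 hq1 hqrec k D m
  have hval := val_id hirr hρ hdig hq0 hq1 hqrec k hD hm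
  have hβk : 0 < Bprod ρ k := Bprod_pos hirr hρ k
  have hβk1 : 0 < Bprod ρ (k+1) := Bprod_pos hirr hρ (k+1)
  have hβdec : Bprod ρ (k+1) < Bprod ρ k := Bprod_dec hirr hρ k
  have hvv : (-1:ℝ)^k * ((m:ℝ) - (D:ℝ)*ρ)
      = (B:ℝ) * Bprod ρ (k+1) - (A:ℝ) * Bprod ρ k := by
    rcases Nat.even_or_odd k with hpar | hpar
    · have hh1 : ((-1:ℝ))^k = 1 := hpar.neg_one_pow
      have hh2 : ((-1:ℝ))^(k+1) = -1 := by rw [pow_succ, hh1]; ring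
      rw [hh1, hh2] at hval
      rw [hh1]
      linarith [hval]
    · have hh1 : ((-1:ℝ))^k = -1 := hpar.neg_one_pow
      have hh2 : ((-1:ℝ))^(k+1) = 1 := by rw [pow_succ, hh1]; ring
      rw [hh1, hh2] at hval
      rw [hh1]
      linarith [hval]
  rw [hvv] at h1 h2
  obtain ⟨hq1le, hq2le⟩ := q_pos hirr hρ hdig hq0 hq1 hqrec k
  have hqk : (1:ℤ) ≤ (qd k : ℤ) := by exact_mod_cast hq1le
  have hqk1 : (qd k : ℤ) ≤ (qd (k+1) : ℤ) := by exact_mod_cast hq2le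
  rcases lt_trichotomy A 0 with hA | hA | hA <;> rcases le_or_gt B 0 with hB | hB
  · -- A<0, B≤0 : D ≤ -q_k
    have hA' : A ≤ -1 := by omega
    nlinarith [hD, hlo]
  · -- A<0, B>0 : val ≥ βk + βk1
    have hA' : (A:ℝ) ≤ -1 := by exact_mod_cast (by omega : A ≤ -1)
    have hB' : (1:ℝ) ≤ (B:ℝ) := by exact_mod_cast (by omega : 1 ≤ B)
    nlinarith
  · -- A=0, B≤0 : val ≤ 0
    subst hA
    have hB' : (B:ℝ) ≤ 0 := by exact_mod_cast hB
    push_cast at h1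
    nlinarith
  · -- A=0, B>0 : D ≥ q_{k+1}
    subst hA
    have hB' : 1 ≤ B := by omega
    nlinarith [hD, hhi]
  · -- A>0, B≤0 : val ≤ -βk
    have hA' : (1:ℝ) ≤ (A:ℝ) := by exact_mod_cast (by omega : 1 ≤ A)
    have hB' : (B:ℝ) ≤ 0 := by exact_mod_cast hB
    nlinarith
  · -- A>0, B>0 : D ≥ q_k + q_{k+1}
    have hA' : 1 ≤ A := by omega
    have hB' : 1 ≤ B := by omega
    nlinarith [hD, hhi]

end CF3

section Master

local notation "𝕋" => AddCircle (1:ℝ)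

lemma master {f : 𝕋 → 𝕋} {F : ℝ → ℝ} {ρ : ℝ}
    (hmono : StrictMono F) (hcont : Continuous F)
    (hper : ∀ x, F (x + 1) = F x + 1) (hirr : Irrational ρ)
    (hrot : Tendsto (fun n : ℕ => F^[n] 0 / n) atTop (𝓝 ρ))
    (X : ℝ) {ι : Type*} [Fintype ι] [Nonempty ι] (νL νR : ι → ℕ) (P : ι → Set 𝕋)
    (hPdesc : ∀ t, P t = (fun y : ℝ => ((y:ℝ) : 𝕋)) ''
      Set.Icc (F^[νL t] X) (F^[νL t] X + Int.fract (F^[νR t] X - F^[νL t] X)))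
    (hne : ∀ t, νL t ≠ νR t)
    (hmatch : ∀ t, ∃ t', νR t = νL t')
    (hdisj : ∀ t t', t ≠ t' → ∀ m : ℤ,
      ¬ ((νL t : ℝ)*ρ < (νR t' : ℝ)*ρ - (⌊(νR t' : ℝ)*ρ - (νL t' : ℝ)*ρ⌋ : ℤ) + m
        ∧ (νL t' : ℝ)*ρ + (m:ℝ) < (νR t : ℝ)*ρ - (⌊(νR t : ℝ)*ρ - (νL t : ℝ)*ρ⌋ : ℤ))) :
    (⋃ t, P t) = Set.univ
      ∧ Pairwise fun t t' => Disjoint (interior (P t)) (interior (P t')) := by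
  set L : ι → ℝ := fun t => F^[νL t] X with hL
  set R : ι → ℝ := fun t => F^[νL t] X + Int.fract (F^[νR t] X - F^[νL t] X) with hR
  have hfloor : ∀ t, R t = F^[νR t] X - (⌊(νR t : ℝ)*ρ - (νL t : ℝ)*ρ⌋ : ℤ) := by
    intro t
    rw [hR]
    simp only
    rw [Int.fract, floor_orb hmono hcont hper hirr hrot X (νR t) (νL t)]
    ring
  have hlen : ∀ t, 0 < R t - L t := by
    intro t
    have h0 : 0 ≤ R t - L t := by
      rw [hR, hL]; simp only; rw [add_sub_cancel_left]; exact Int.fract_nonneg _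
    rcases lt_or_eq_of_le h0 with h | h
    · exact h
    · exfalso
      have : R t - L t = Int.fract (F^[νR t] X - F^[νL t] X) := by
        rw [hR, hL]; simp only; ring
      rw [this] at h
      have hz : F^[νR t] X - F^[νL t] X = (⌊F^[νR t] X - F^[νL t] X⌋ : ℤ) := by
        have := Int.fract (F^[νR t] X - F^[νL t] X)
        rw [Int.fract] at h
        linarith [h.symm]
      exact orb_ne hmono hper hirr hrot X (fun hc => hne t hc.symm) _ hz
  have hlt1 : ∀ t, R t - L t < 1 := by
    intro t
    rw [hR, hL]; simp only; rw [add_sub_cancel_left]; exact Int.fract_lt_one _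
  constructor
  · -- covering
    have hcov := cover_lemma L R hlen hlt1 ?_
    · rw [← hcov]
      apply Set.iUnion_congr
      intro t
      rw [hPdesc t]
    · intro t
      obtain ⟨t', ht'⟩ := hmatch t
      refine ⟨t', -⌊(νR t : ℝ)*ρ - (νL t : ℝ)*ρ⌋, ?_⟩
      rw [hfloor t, hL]
      simp only [ht']
      push_cast
      ring
  · -- disjointness
    intro t t' htt'
    rw [Set.disjoint_left]
    intro c hc hc'
    rw [hPdesc t] at hc
    rw [hPdesc t'] at hc'
    have h1 := interior_subset_Ioo (by linarith [hlen t] : (0:ℝ) ≤ R t - L t)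
      (hlt1 t) hc
    have h2 := interior_subset_Ioo (by linarith [hlen t'] : (0:ℝ) ≤ R t' - L t')
      (hlt1 t') hc'
    obtain ⟨y, hy, hyc⟩ := h1
    obtain ⟨y', hy', hyc'⟩ := h2
    obtain ⟨mm, hmm⟩ := (coe_eq_iff y y').mp (hyc.trans hyc'.symm)
    -- y' = y + mm;  L t < y < R t ; L t' < y' < R t'
    have hA : L t < R t' + (-mm : ℤ) := by
      push_cast
      have := hy.1
      have := hy'.2
      rw [hmm] at this
      linarith [hy.2]
    have hB : L t' + (-mm : ℤ) < R t := by
      push_cast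
      have := hy'.1
      rw [hmm] at this
      linarith [hy.2]
    set m : ℤ := -mm
    -- convert to rotation inequalities
    have hrot1 : (νL t : ℝ)*ρ < (νR t' : ℝ)*ρ - (⌊(νR t' : ℝ)*ρ - (νL t' : ℝ)*ρ⌋ : ℤ) + m := by
      by_contra hle
      push_neg at hle
      have : F^[νR t'] X + ((-⌊(νR t' : ℝ)*ρ - (νL t' : ℝ)*ρ⌋ + m : ℤ) : ℝ) ≤ F^[νL t] X := by
        have := (order_le hmono hcont hper hirr hrot X (νR t') (νL t)
          (-⌊(νR t' : ℝ)*ρ - (νL t' : ℝ)*ρ⌋ + m)).mpr (by push_cast; push_cast at hle; linarith)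
        exact this
      rw [hfloor t'] at hA
      push_cast at this hA
      rw [hL] at hA
      linarith
    have hrot2 : (νL t' : ℝ)*ρ + (m:ℝ) < (νR t : ℝ)*ρ - (⌊(νR t : ℝ)*ρ - (νL t : ℝ)*ρ⌋ : ℤ) := by
      by_contra hle
      push_neg at hle
      have : F^[νR t] X + ((-⌊(νR t : ℝ)*ρ - (νL t : ℝ)*ρ⌋ - m : ℤ) : ℝ) ≤ F^[νL t'] X := by
        have := (order_le hmono hcont hper hirr hrot X (νR t) (νL t')
          (-⌊(νR t : ℝ)*ρ - (νL t : ℝ)*ρ⌋ - m)).mpr (by push_cast; linarith)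
        exact this
      rw [hfloor t] at hB
      push_cast at this hB
      rw [hL] at hB
      linarith
    exact hdisj t t' htt' m ⟨hrot1, hrot2⟩

end Master

section Helpers

local notation "𝕋" => AddCircle (1:ℝ)

variable {f : 𝕋 → 𝕋} {F : ℝ → ℝ} {ρ : ℝ}

lemma arc_desc (hlift : ∀ x : ℝ, f ((x : ℝ) : 𝕋) = ((F x : ℝ) : 𝕋))
    (hmono : StrictMono F) (hcont : Continuous F)
    (hper : ∀ x, F (x + 1) = F x + 1) (hirr : Irrational ρ)
    (hrot : Tendsto (fun n : ℕ => F^[n] 0 / n) atTop (𝓝 ρ))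
    (X : ℝ) (n l i : ℕ) :
    f^[i] '' posArc ((F^[n] X : ℝ) : 𝕋) ((F^[l] X : ℝ) : 𝕋)
      = (fun y : ℝ => ((y:ℝ) : 𝕋)) ''
        Set.Icc (F^[i + n] X) (F^[i + n] X + Int.fract (F^[i + l] X - F^[i + n] X)) := by
  rw [posArc_eq]
  set δ := Int.fract (F^[l] X - F^[n] X) with hδdef
  have hδ0 : 0 ≤ δ := Int.fract_nonneg _
  rw [image_arc hlift hmono hcont i (le_add_of_nonneg_right hδ0)]
  have h1 : F^[i] (F^[n] X) = F^[i+n] X := (Function.iterate_add_apply F i n X).symm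
  have h2 : F^[i] (F^[n] X + δ) = F^[i+n] X + Int.fract (F^[i+l] X - F^[i+n] X) := by
    have hδ : δ = F^[l] X - F^[n] X - (⌊(l:ℝ)*ρ - (n:ℝ)*ρ⌋ : ℤ) := by
      rw [hδdef, Int.fract, floor_orb hmono hcont hper hirr hrot X l n]
    have h3 : F^[n] X + δ = F^[l] X + ((-⌊(l:ℝ)*ρ - (n:ℝ)*ρ⌋ : ℤ) : ℝ) := by
      rw [hδ]; push_cast; ring
    rw [h3, Fiter_add_int hper i _ _, ← Function.iterate_add_apply]
    rw [Int.fract, floor_orb hmono hcont hper hirr hrot X (i+l) (i+n)]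
    have h4 : ⌊((i+l:ℕ):ℝ)*ρ - ((i+n:ℕ):ℝ)*ρ⌋ = ⌊(l:ℝ)*ρ - (n:ℝ)*ρ⌋ := by
      congr 1; push_cast; ring
    rw [h4]; push_cast; ring
  rw [h1, h2]

lemma mem_arc_iff (hmono : StrictMono F) (hcont : Continuous F)
    (hper : ∀ x, F (x + 1) = F x + 1) (hirr : Irrational ρ)
    (hrot : Tendsto (fun n : ℕ => F^[n] 0 / n) atTop (𝓝 ρ))
    (X : ℝ) (w n l : ℕ) :
    (((F^[w] X : ℝ) : 𝕋) ∈ posArc ((F^[n] X : ℝ) : 𝕋) ((F^[l] X : ℝ) : 𝕋))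
    ↔ (w:ℝ)*ρ - (⌊(w:ℝ)*ρ - (n:ℝ)*ρ⌋ : ℤ) ≤ (l:ℝ)*ρ - (⌊(l:ℝ)*ρ - (n:ℝ)*ρ⌋ : ℤ) := by
  rw [posArc_eq]
  have h := mem_image_Icc (a := F^[n] X)
    (b := F^[n] X + Int.fract (F^[l] X - F^[n] X)) (w := F^[w] X)
    (by rw [add_sub_cancel_left]; exact Int.fract_nonneg _)
    (by rw [add_sub_cancel_left]; exact Int.fract_lt_one _)
  rw [h, add_sub_cancel_left]
  rw [Int.fract, Int.fract, floor_orb hmono hcont hper hirr hrot X w n,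
    floor_orb hmono hcont hper hirr hrot X l n]
  constructor
  · intro hle
    have : F^[w] X + ((⌊(l:ℝ)*ρ - (n:ℝ)*ρ⌋ - ⌊(w:ℝ)*ρ - (n:ℝ)*ρ⌋ : ℤ) : ℝ) ≤ F^[l] X := by
      push_cast; linarith
    have h2 := (order_le hmono hcont hper hirr hrot X w l _).mp this
    push_cast at h2
    linarith
  · intro hle
    have h2 := (order_le hmono hcont hper hirr hrot X w l
      (⌊(l:ℝ)*ρ - (n:ℝ)*ρ⌋ - ⌊(w:ℝ)*ρ - (n:ℝ)*ρ⌋)).mpr (by push_cast; linarith)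
    push_cast at h2
    linarith

end Helpers

lemma floor_shift (i q : ℕ) (c : ℝ) (z : ℤ) (h : ⌊(q:ℝ)*c⌋ = z) :
    ⌊((i + q : ℕ):ℝ)*c - (i:ℝ)*c⌋ = z := by
  rw [show ((i + q:ℕ):ℝ)*c - (i:ℝ)*c = (q:ℝ)*c by push_cast; ring]; exact h

lemma floor_shift_neg (i q : ℕ) (c : ℝ) (z : ℤ) (h : ⌊-((q:ℝ)*c)⌋ = z) :
    ⌊(i:ℝ)*c - ((i + q : ℕ):ℝ)*c⌋ = z := by
  rw [show (i:ℝ)*c - ((i + q:ℕ):ℝ)*c = -((q:ℝ)*c) by push_cast; ring]; exact h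

set_option maxHeartbeats 2000000 in
/-- the dynamical partition of level `k`,
`P_k(x) = { f^i(I_k(x)) : 0 ≤ i ≤ q_{k+1}-1 } ∪ { f^j(I_{k+1}(x)) : 0 ≤ j ≤ q_k-1 }`,
covers the circle and its intervals have pairwise disjoint interiors. -/
theorem dynamical_partition (f : AddCircle (1:ℝ) → AddCircle (1:ℝ)) (F : ℝ → ℝ)
    (hlift : ∀ x : ℝ, f ((x : ℝ) : AddCircle (1:ℝ)) = ((F x : ℝ) : AddCircle (1:ℝ)))
    (hmono : StrictMono F) (hcont : Continuous F) (hsurj : Function.Surjective F)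
    (hper : ∀ x, F (x + 1) = F x + 1)
    (ρ : ℝ) (hirr : Irrational ρ) (hρ : ρ ∈ Set.Ioo (0:ℝ) 1)
    (hrot : Tendsto (fun n : ℕ => F^[n] 0 / n) atTop (𝓝 ρ))
    (a qd : ℕ → ℕ)
    (hdig : ∀ j, (a j : ℤ) = ⌊(gauss^[j] ρ)⁻¹⌋)
    (hq0 : qd 0 = 1) (hq1 : qd 1 = a 0)
    (hqrec : ∀ k, qd (k + 2) = a (k + 1) * qd (k + 1) + qd k)
    (k : ℕ) (x : AddCircle (1:ℝ)) (Ik Ik1 : Set (AddCircle (1:ℝ)))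
    (hIk : Ik = posArc x (f^[qd k] x) ∨ Ik = posArc (f^[qd k] x) x)
    (hIknot : f^[qd (k + 1)] x ∉ Ik)
    (hIk1 : Ik1 = posArc x (f^[qd (k + 1)] x) ∨ Ik1 = posArc (f^[qd (k + 1)] x) x)
    (hIk1not : f^[qd (k + 2)] x ∉ Ik1)
    (P : Fin (qd (k + 1)) ⊕ Fin (qd k) → Set (AddCircle (1:ℝ)))
    (hP : P = Sum.elim (fun i : Fin (qd (k + 1)) => f^[(i : ℕ)] '' Ik)
      (fun j : Fin (qd k) => f^[(j : ℕ)] '' Ik1)) :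
    (⋃ i, P i) = Set.univ ∧
      Pairwise fun i j => Disjoint (interior (P i)) (interior (P j)) := by
  obtain ⟨X, hX⟩ := coe_surj x
  have hO : ∀ n : ℕ, f^[n] x = ((F^[n] X : ℝ) : AddCircle (1:ℝ)) := by
    intro n; rw [← hX, hlift_iter hlift]
  have hx0 : x = ((F^[0] X : ℝ) : AddCircle (1:ℝ)) := by
    rw [Function.iterate_zero_apply]; exact hX.symm
  have hqp := q_pos hirr hρ hdig hq0 hq1 hqrec
  have hqk1pos : 0 < qd (k+1) := (hqp (k+1)).1
  have hqkpos : 0 < qd k := (hqp k).1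
  have hqmono : qd k ≤ qd (k+1) := (hqp k).2
  have hqmono1 : qd (k+1) ≤ qd (k+2) := (hqp (k+1)).2
  have hβpos : ∀ j, 0 < Bprod ρ j := Bprod_pos hirr hρ
  have hβlt1 : ∀ j, Bprod ρ j < 1 := Bprod_lt_one hirr hρ
  have hβsum : ∀ j, Bprod ρ j + Bprod ρ (j+1) ≤ 1 := Bsum_le_one hirr hρ hdig
  have hβdec : ∀ j, Bprod ρ (j+1) < Bprod ρ j := Bprod_dec hirr hρ
  have hε : ∀ j, (qd j : ℝ) * ρ - (convP a j : ℝ) = (-1)^j * Bprod ρ j :=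
    eps_id hirr hρ hdig hq0 hq1 hqrec
  haveI : Nonempty (Fin (qd (k+1)) ⊕ Fin (qd k)) := ⟨Sum.inl ⟨0, hqk1pos⟩⟩
  -- integer bounds, casts
  have hqkZ : (1:ℤ) ≤ (qd k : ℤ) := by exact_mod_cast hqkpos
  have hqmZ : (qd k : ℤ) ≤ (qd (k+1) : ℤ) := by exact_mod_cast hqmono
  rcases Nat.even_or_odd k with hpar | hpar
  · -- EVEN CASE
    have s1 : ((-1:ℝ))^k = 1 := hpar.neg_one_pow
    have s2 : ((-1:ℝ))^(k+1) = -1 := by rw [pow_succ, s1]; ring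
    have s3 : ((-1:ℝ))^(k+2) = 1 := by rw [pow_succ, s2]; ring
    have hEk : (qd k : ℝ) * ρ = (convP a k : ℝ) + Bprod ρ k := by
      have h := hε k; rw [s1] at h; linarith
    have hEk1 : (qd (k+1) : ℝ) * ρ = (convP a (k+1) : ℝ) - Bprod ρ (k+1) := by
      have h := hε (k+1); rw [s2] at h; linarith
    have hEk2 : (qd (k+2) : ℝ) * ρ = (convP a (k+2) : ℝ) + Bprod ρ (k+2) := by
      have h := hε (k+2); rw [s3] at h; linarith
    -- floor computations
    have hfqk : ⌊(qd k : ℝ)*ρ⌋ = convP a k := by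
      rw [Int.floor_eq_iff, hEk]
      constructor
      · linarith [hβpos k]
      · push_cast; linarith [hβlt1 k]
    have hfnq1 : ⌊-((qd (k+1) : ℝ)*ρ)⌋ = -convP a (k+1) := by
      rw [Int.floor_eq_iff, hEk1]
      constructor
      · push_cast; linarith [hβpos (k+1), hβlt1 (k+1)]
      · push_cast; linarith [hβpos (k+1), hβlt1 (k+1)]
    -- resolve the arcs
    have hIkeq : Ik = posArc x (f^[qd k] x) := by
      rcases hIk with h | h
      · exact h
      · exfalso
        apply hIknot
        rw [h, hO (qd (k+1)), hO (qd k), hx0]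
        rw [mem_arc_iff hmono hcont hper hirr hrot X (qd (k+1)) (qd k) 0]
        have hz1 : ⌊(qd (k+1):ℝ)*ρ - (qd k:ℝ)*ρ⌋ = convP a (k+1) - convP a k - 1 := by
          rw [Int.floor_eq_iff, hEk, hEk1]
          constructor
          · push_cast; linarith [hβsum k]
          · push_cast; linarith [hβpos k, hβpos (k+1)]
        have hz2 : ⌊((0:ℕ):ℝ)*ρ - (qd k:ℝ)*ρ⌋ = -convP a k - 1 := by
          rw [Int.floor_eq_iff, hEk]
          constructor
          · push_cast; linarith [hβlt1 k]
          · push_cast; linarith [hβpos k]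
        rw [hz1, hz2, hEk1]
        push_cast
        linarith [hβpos (k+1)]
    have hIk1eq : Ik1 = posArc (f^[qd (k+1)] x) x := by
      rcases hIk1 with h | h
      · exfalso
        apply hIk1not
        rw [h, hO (qd (k+2)), hO (qd (k+1)), hx0]
        rw [mem_arc_iff hmono hcont hper hirr hrot X (qd (k+2)) 0 (qd (k+1))]
        have hz1 : ⌊(qd (k+2):ℝ)*ρ - ((0:ℕ):ℝ)*ρ⌋ = convP a (k+2) := by
          rw [Int.floor_eq_iff, hEk2]
          constructor
          · push_cast; linarith [hβpos (k+2)]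
          · push_cast; linarith [hβlt1 (k+2)]
        have hz2 : ⌊(qd (k+1):ℝ)*ρ - ((0:ℕ):ℝ)*ρ⌋ = convP a (k+1) - 1 := by
          rw [Int.floor_eq_iff, hEk1]
          constructor
          · push_cast; linarith [hβlt1 (k+1)]
          · push_cast; linarith [hβpos (k+1)]
        rw [hz1, hz2, hEk1, hEk2]
        push_cast
        linarith [hβsum (k+1)]
      · exact h
    -- instantiate the master lemma
    refine master (f := f) hmono hcont hper hirr hrot X
      (Sum.elim (fun i : Fin (qd (k+1)) => (i:ℕ)) (fun j : Fin (qd k) => (j:ℕ) + qd (k+1)))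
      (Sum.elim (fun i : Fin (qd (k+1)) => (i:ℕ) + qd k) (fun j : Fin (qd k) => (j:ℕ)))
      P ?_ ?_ ?_ ?_
    · -- hPdesc
      intro t
      rcases t with i | j
      · rw [hP]
        simp only [Sum.elim_inl]
        rw [hIkeq, hO (qd k), hx0]
        rw [arc_desc hlift hmono hcont hper hirr hrot X 0 (qd k) (i:ℕ)]
        simp only [Nat.add_zero]
      · rw [hP]
        simp only [Sum.elim_inr]
        rw [hIk1eq, hO (qd (k+1)), hx0]
        rw [arc_desc hlift hmono hcont hper hirr hrot X (qd (k+1)) 0 (j:ℕ)]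
        simp only [Nat.add_zero]
    · -- hne
      intro t
      rcases t with i | j
      · simp only [Sum.elim_inl]; omega
      · simp only [Sum.elim_inr]; omega
    · -- hmatch
      intro t
      rcases t with i | j
      · by_cases hc : (i:ℕ) + qd k < qd (k+1)
        · exact ⟨Sum.inl ⟨(i:ℕ) + qd k, hc⟩, rfl⟩
        · refine ⟨Sum.inr ⟨(i:ℕ) + qd k - qd (k+1), ?_⟩, ?_⟩
          · have := i.isLt; omega
          · simp only [Sum.elim_inl, Sum.elim_inr]
            have := i.isLt; omega
      · exact ⟨Sum.inl ⟨(j:ℕ), lt_of_lt_of_le j.isLt hqmono⟩, rfl⟩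
    · -- hdisj
      intro t t' htt' m hcond
      obtain ⟨h1, h2⟩ := hcond
      rcases t with i | j <;> rcases t' with i' | j'
      · -- inl, inl : L1 with length β_k
        simp only [Sum.elim_inl] at h1 h2
        rw [floor_shift (i':ℕ) (qd k) ρ _ hfqk] at h1
        rw [floor_shift (i:ℕ) (qd k) ρ _ hfqk] at h2
        have hvne : (i:ℕ) ≠ (i':ℕ) := by
          intro hv; exact htt' (by rw [Fin.ext hv])
        have hiZ : ((i:ℕ):ℤ) < (qd (k+1):ℤ) := by exact_mod_cast i.isLt
        have hiZ' : ((i':ℕ):ℤ) < (qd (k+1):ℤ) := by exact_mod_cast i'.isLt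
        have hD0 : ((i:ℕ):ℤ) - ((i':ℕ):ℤ) ≠ 0 := by
          intro hv; apply hvne; omega
        have hDlt : |((i:ℕ):ℤ) - ((i':ℕ):ℤ)| < (qd (k+1):ℤ) := by
          rw [abs_lt]; omega
        have hL1 := L1 hirr hρ hdig hq0 hq1 hqrec k (((i:ℕ):ℤ) - ((i':ℕ):ℤ)) m hD0 hDlt
        have habs : |(((((i:ℕ):ℤ) - ((i':ℕ):ℤ)):ℤ):ℝ) * ρ - (m:ℝ)| < Bprod ρ k := by
          rw [abs_lt]
          push_cast at h1 h2 ⊢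
          constructor
          · linarith [h2, hEk]
          · linarith [h1, hEk]
        linarith [hL1, habs]
      · -- t = inl i, t' = inr j' : L2
        simp only [Sum.elim_inl, Sum.elim_inr] at h1 h2
        rw [floor_shift_neg (j':ℕ) (qd (k+1)) ρ _ hfnq1] at h1
        rw [floor_shift (i:ℕ) (qd k) ρ _ hfqk] at h2
        have hiZ : ((i:ℕ):ℤ) < (qd (k+1):ℤ) := by exact_mod_cast i.isLt
        have hjZ : ((j':ℕ):ℤ) < (qd k:ℤ) := by exact_mod_cast j'.isLt
        have hL2 := L2 hirr hρ hdig hq0 hq1 hqrec k (((i:ℕ):ℤ) - ((j':ℕ):ℤ))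
          (convP a (k+1) + m) (by omega) (by omega)
        apply hL2
        rw [s1]
        push_cast at h1 h2 ⊢
        constructor
        · linarith [h1]
        · nlinarith [h2, hEk, hEk1]
      · -- t = inr j, t' = inl i' : L2
        simp only [Sum.elim_inl, Sum.elim_inr] at h1 h2
        rw [floor_shift (i':ℕ) (qd k) ρ _ hfqk] at h1
        rw [floor_shift_neg (j:ℕ) (qd (k+1)) ρ _ hfnq1] at h2
        have hiZ : ((i':ℕ):ℤ) < (qd (k+1):ℤ) := by exact_mod_cast i'.isLt
        have hjZ : ((j:ℕ):ℤ) < (qd k:ℤ) := by exact_mod_cast j.isLt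
        have hL2 := L2 hirr hρ hdig hq0 hq1 hqrec k (((i':ℕ):ℤ) - ((j:ℕ):ℤ))
          (convP a (k+1) - m) (by omega) (by omega)
        apply hL2
        rw [s1]
        push_cast at h1 h2 ⊢
        constructor
        · linarith [h2]
        · nlinarith [h1, hEk, hEk1]
      · -- inr, inr : L1 with length β_{k+1}
        simp only [Sum.elim_inr] at h1 h2
        rw [floor_shift_neg (j':ℕ) (qd (k+1)) ρ _ hfnq1] at h1
        rw [floor_shift_neg (j:ℕ) (qd (k+1)) ρ _ hfnq1] at h2
        have hvne : (j:ℕ) ≠ (j':ℕ) := by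
          intro hv; exact htt' (by rw [Fin.ext hv])
        have hjZ : ((j:ℕ):ℤ) < (qd k:ℤ) := by exact_mod_cast j.isLt
        have hjZ' : ((j':ℕ):ℤ) < (qd k:ℤ) := by exact_mod_cast j'.isLt
        have hD0 : ((j:ℕ):ℤ) - ((j':ℕ):ℤ) ≠ 0 := by
          intro hv; apply hvne; omega
        have hDlt : |((j:ℕ):ℤ) - ((j':ℕ):ℤ)| < (qd (k+1):ℤ) := by
          rw [abs_lt]; omega
        have hL1 := L1 hirr hρ hdig hq0 hq1 hqrec k (((j:ℕ):ℤ) - ((j':ℕ):ℤ)) m hD0 hDlt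
        have habs : |(((((j:ℕ):ℤ) - ((j':ℕ):ℤ)):ℤ):ℝ) * ρ - (m:ℝ)| < Bprod ρ (k+1) := by
          rw [abs_lt]
          push_cast at h1 h2 ⊢
          constructor
          · linarith [h2, hEk1]
          · linarith [h1, hEk1]
        linarith [hL1, habs, hβdec k]
  · -- ODD CASE
    have s1 : ((-1:ℝ))^k = -1 := hpar.neg_one_pow
    have s2 : ((-1:ℝ))^(k+1) = 1 := by rw [pow_succ, s1]; ring
    have s3 : ((-1:ℝ))^(k+2) = -1 := by rw [pow_succ, s2]; ring
    have hEk : (qd k : ℝ) * ρ = (convP a k : ℝ) - Bprod ρ k := by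
      have h := hε k; rw [s1] at h; linarith
    have hEk1 : (qd (k+1) : ℝ) * ρ = (convP a (k+1) : ℝ) + Bprod ρ (k+1) := by
      have h := hε (k+1); rw [s2] at h; linarith
    have hEk2 : (qd (k+2) : ℝ) * ρ = (convP a (k+2) : ℝ) - Bprod ρ (k+2) := by
      have h := hε (k+2); rw [s3] at h; linarith
    have hfnqk : ⌊-((qd k : ℝ)*ρ)⌋ = -convP a k := by
      rw [Int.floor_eq_iff, hEk]
      constructor
      · push_cast; linarith [hβpos k, hβlt1 k]
      · push_cast; linarith [hβpos k, hβlt1 k]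
    have hfq1 : ⌊(qd (k+1) : ℝ)*ρ⌋ = convP a (k+1) := by
      rw [Int.floor_eq_iff, hEk1]
      constructor
      · push_cast; linarith [hβpos (k+1)]
      · push_cast; linarith [hβlt1 (k+1)]
    have hIkeq : Ik = posArc (f^[qd k] x) x := by
      rcases hIk with h | h
      · exfalso
        apply hIknot
        rw [h, hO (qd (k+1)), hO (qd k), hx0]
        rw [mem_arc_iff hmono hcont hper hirr hrot X (qd (k+1)) 0 (qd k)]
        have hz1 : ⌊(qd (k+1):ℝ)*ρ - ((0:ℕ):ℝ)*ρ⌋ = convP a (k+1) := by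
          rw [Int.floor_eq_iff, hEk1]
          constructor
          · push_cast; linarith [hβpos (k+1)]
          · push_cast; linarith [hβlt1 (k+1)]
        have hz2 : ⌊(qd k:ℝ)*ρ - ((0:ℕ):ℝ)*ρ⌋ = convP a k - 1 := by
          rw [Int.floor_eq_iff, hEk]
          constructor
          · push_cast; linarith [hβlt1 k]
          · push_cast; linarith [hβpos k]
        rw [hz1, hz2, hEk1, hEk]
        push_cast
        linarith [hβsum k]
      · exact h
    have hIk1eq : Ik1 = posArc x (f^[qd (k+1)] x) := by
      rcases hIk1 with h | h
      · exact h
      · exfalso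
        apply hIk1not
        rw [h, hO (qd (k+2)), hO (qd (k+1)), hx0]
        rw [mem_arc_iff hmono hcont hper hirr hrot X (qd (k+2)) (qd (k+1)) 0]
        have hz1 : ⌊(qd (k+2):ℝ)*ρ - (qd (k+1):ℝ)*ρ⌋
            = convP a (k+2) - convP a (k+1) - 1 := by
          rw [Int.floor_eq_iff, hEk1, hEk2]
          constructor
          · push_cast; linarith [hβsum (k+1)]
          · push_cast; linarith [hβpos (k+1), hβpos (k+2)]
        have hz2 : ⌊((0:ℕ):ℝ)*ρ - (qd (k+1):ℝ)*ρ⌋ = -convP a (k+1) - 1 := by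
          rw [Int.floor_eq_iff, hEk1]
          constructor
          · push_cast; linarith [hβlt1 (k+1)]
          · push_cast; linarith [hβpos (k+1)]
        rw [hz1, hz2, hEk2]
        push_cast
        linarith [hβpos (k+2)]
    refine master (f := f) hmono hcont hper hirr hrot X
      (Sum.elim (fun i : Fin (qd (k+1)) => (i:ℕ) + qd k) (fun j : Fin (qd k) => (j:ℕ)))
      (Sum.elim (fun i : Fin (qd (k+1)) => (i:ℕ)) (fun j : Fin (qd k) => (j:ℕ) + qd (k+1)))
      P ?_ ?_ ?_ ?_
    · intro t
      rcases t with i | j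
      · rw [hP]
        simp only [Sum.elim_inl]
        rw [hIkeq, hO (qd k), hx0]
        rw [arc_desc hlift hmono hcont hper hirr hrot X (qd k) 0 (i:ℕ)]
        simp only [Nat.add_zero]
      · rw [hP]
        simp only [Sum.elim_inr]
        rw [hIk1eq, hO (qd (k+1)), hx0]
        rw [arc_desc hlift hmono hcont hper hirr hrot X 0 (qd (k+1)) (j:ℕ)]
        simp only [Nat.add_zero]
    · intro t
      rcases t with i | j
      · simp only [Sum.elim_inl]; omega
      · simp only [Sum.elim_inr]; omega
    · intro t
      rcases t with i | j
      · by_cases hc : (i:ℕ) < qd k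
        · exact ⟨Sum.inr ⟨(i:ℕ), hc⟩, rfl⟩
        · refine ⟨Sum.inl ⟨(i:ℕ) - qd k, ?_⟩, ?_⟩
          · have := i.isLt; omega
          · simp only [Sum.elim_inl]
            omega
      · refine ⟨Sum.inl ⟨(j:ℕ) + qd (k+1) - qd k, ?_⟩, ?_⟩
        · have := j.isLt; omega
        · simp only [Sum.elim_inl, Sum.elim_inr]
          omega
    · intro t t' htt' m hcond
      obtain ⟨h1, h2⟩ := hcond
      rcases t with i | j <;> rcases t' with i' | j'
      · -- inl, inl
        simp only [Sum.elim_inl] at h1 h2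
        rw [floor_shift_neg (i':ℕ) (qd k) ρ _ hfnqk] at h1
        rw [floor_shift_neg (i:ℕ) (qd k) ρ _ hfnqk] at h2
        have hvne : (i:ℕ) ≠ (i':ℕ) := by
          intro hv; exact htt' (by rw [Fin.ext hv])
        have hiZ : ((i:ℕ):ℤ) < (qd (k+1):ℤ) := by exact_mod_cast i.isLt
        have hiZ' : ((i':ℕ):ℤ) < (qd (k+1):ℤ) := by exact_mod_cast i'.isLt
        have hD0 : ((i:ℕ):ℤ) - ((i':ℕ):ℤ) ≠ 0 := by
          intro hv; apply hvne; omega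
        have hDlt : |((i:ℕ):ℤ) - ((i':ℕ):ℤ)| < (qd (k+1):ℤ) := by
          rw [abs_lt]; omega
        have hL1 := L1 hirr hρ hdig hq0 hq1 hqrec k (((i:ℕ):ℤ) - ((i':ℕ):ℤ)) m hD0 hDlt
        have habs : |(((((i:ℕ):ℤ) - ((i':ℕ):ℤ)):ℤ):ℝ) * ρ - (m:ℝ)| < Bprod ρ k := by
          rw [abs_lt]
          push_cast at h1 h2 ⊢
          constructor
          · linarith [h2, hEk]
          · linarith [h1, hEk]
        linarith [hL1, habs]
      · -- t = inl i, t' = inr j'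
        simp only [Sum.elim_inl, Sum.elim_inr] at h1 h2
        rw [floor_shift (j':ℕ) (qd (k+1)) ρ _ hfq1] at h1
        rw [floor_shift_neg (i:ℕ) (qd k) ρ _ hfnqk] at h2
        have hiZ : ((i:ℕ):ℤ) < (qd (k+1):ℤ) := by exact_mod_cast i.isLt
        have hjZ : ((j':ℕ):ℤ) < (qd k:ℤ) := by exact_mod_cast j'.isLt
        have hL2 := L2 hirr hρ hdig hq0 hq1 hqrec k (((i:ℕ):ℤ) - ((j':ℕ):ℤ))
          (m - convP a k) (by omega) (by omega)
        apply hL2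
        rw [s1]
        push_cast at h1 h2 ⊢
        constructor
        · linarith [h2]
        · linarith [h1, hEk, hEk1]
      · -- t = inr j, t' = inl i'
        simp only [Sum.elim_inl, Sum.elim_inr] at h1 h2
        rw [floor_shift_neg (i':ℕ) (qd k) ρ _ hfnqk] at h1
        rw [floor_shift (j:ℕ) (qd (k+1)) ρ _ hfq1] at h2
        have hiZ : ((i':ℕ):ℤ) < (qd (k+1):ℤ) := by exact_mod_cast i'.isLt
        have hjZ : ((j:ℕ):ℤ) < (qd k:ℤ) := by exact_mod_cast j.isLt
        have hL2 := L2 hirr hρ hdig hq0 hq1 hqrec k (((i':ℕ):ℤ) - ((j:ℕ):ℤ))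
          (-(convP a k) - m) (by omega) (by omega)
        apply hL2
        rw [s1]
        push_cast at h1 h2 ⊢
        constructor
        · linarith [h1]
        · linarith [h2, hEk, hEk1]
      · -- inr, inr
        simp only [Sum.elim_inr] at h1 h2
        rw [floor_shift (j':ℕ) (qd (k+1)) ρ _ hfq1] at h1
        rw [floor_shift (j:ℕ) (qd (k+1)) ρ _ hfq1] at h2
        have hvne : (j:ℕ) ≠ (j':ℕ) := by
          intro hv; exact htt' (by rw [Fin.ext hv])
        have hjZ : ((j:ℕ):ℤ) < (qd k:ℤ) := by exact_mod_cast j.isLt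
        have hjZ' : ((j':ℕ):ℤ) < (qd k:ℤ) := by exact_mod_cast j'.isLt
        have hD0 : ((j:ℕ):ℤ) - ((j':ℕ):ℤ) ≠ 0 := by
          intro hv; apply hvne; omega
        have hDlt : |((j:ℕ):ℤ) - ((j':ℕ):ℤ)| < (qd (k+1):ℤ) := by
          rw [abs_lt]; omega
        have hL1 := L1 hirr hρ hdig hq0 hq1 hqrec k (((j:ℕ):ℤ) - ((j':ℕ):ℤ)) m hD0 hDlt
        have habs : |(((((j:ℕ):ℤ) - ((j':ℕ):ℤ)):ℤ):ℝ) * ρ - (m:ℝ)| < Bprod ρ (k+1) := by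
          rw [abs_lt]
          push_cast at h1 h2 ⊢
          constructor
          · linarith [h2, hEk1]
          · linarith [h1, hEk1]
        linarith [hL1, habs, hβdec k]
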